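/- arXiv:1503.02564 — 2 statements merged into one kernel-verified Lean document; each statement's English description precedes it below -/
import Mathlib

section
/- Let Y be a family of n×n-indexed matrices (or scalars) satisfying the shift-invariance Y_{n,q} = Y_{n-1,q-1} for all 2 ≤ q ≤ n. Define L recursively by L_{n,n} = Y_{n,n} and L_{n,s} = ∑_{q=s}^{n-1} Y_{n,q} L_{q,s} for 1 ≤ s < n. Then L is also shift-invariant: L_{n,s} = L_{n-1,s-1} for all 2 ≤ s ≤ n. -/
/-- If the family `Y_{n,q}` of matrices is shift-invariant (`Y_{n,q} = Y_{n-1,q-1}` for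
`2 ≤ q ≤ n`) and `L` is defined recursively by `L_{n,n} = Y_{n,n}` and
`L_{n,s} = ∑_{q=s}^{n-1} Y_{n,q} L_{q,s}` for `1 ≤ s < n`, then `L` is also
shift-invariant: `L_{n,s} = L_{n-1,s-1}` for `2 ≤ s ≤ n`. -/
theorem shift_invariance_of_recursive_L
    (m : ℕ) (Y L : ℕ → ℕ → Matrix (Fin m) (Fin m) ℂ)
    (hY : ∀ n q : ℕ, 2 ≤ q → q ≤ n → Y n q = Y (n - 1) (q - 1))
    (hLdiag : ∀ n : ℕ, L n n = Y n n)
    (hLrec : ∀ n s : ℕ, 1 ≤ s → s < n →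
      L n s = ∑ q ∈ Finset.Icc s (n - 1), Y n q * L q s) :
    ∀ n s : ℕ, 2 ≤ s → s ≤ n → L n s = L (n - 1) (s - 1) := by
  intro n
  induction n using Nat.strong_induction_on with
  | _ n ih =>
    intro s hs2 hsn
    rcases eq_or_lt_of_le hsn with h | h
    · subst h
      rw [hLdiag, hLdiag, hY s s hs2 le_rfl]
    · -- s < n
      have h1s : 1 ≤ s := le_trans (by norm_num) hs2
      rw [hLrec n s h1s h,
        hLrec (n - 1) (s - 1) (by omega) (by omega)]
      have hnn : n - 1 - 1 = n - 2 := by omega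
      rw [hnn]
      rw [show Finset.Icc (s - 1) (n - 2) = Finset.image (fun q => q - 1) (Finset.Icc s (n - 1)) by
        ext x
        simp only [Finset.mem_image, Finset.mem_Icc]
        constructor
        · rintro ⟨hx1, hx2⟩; exact ⟨x + 1, ⟨by omega, by omega⟩, by omega⟩
        · rintro ⟨y, ⟨hy1, hy2⟩, rfl⟩; omega]
      rw [Finset.sum_image (by intro a ha b hb hab; simp only [Finset.mem_coe, Finset.mem_Icc] at ha hb hab; omega)]
      apply Finset.sum_congr rfl
      intro q hq
      simp only [Finset.mem_Icc] at hq
      rw [hY n q (le_trans hs2 hq.1) (by omega)]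
      congr 1
      exact ih q (by omega) s hs2 hq.1
end

section
/- Let f : C → R and consider the Durán–Sanz Serna scheme for the nonlinear Schrödinger equation: i(u_n − u_{n-1})/Δt + ∂_{xx} v_n + f(v_n) v_n = 0 with v_n = (u_n+u_{n-1})/2 and homogeneous Neumann boundary conditions on (a,b). Then the scheme conserves the discrete L² norm: ‖u_n‖_{L²(a,b)} = ‖u_{n-1}‖_{L²(a,b)}. -/
open Complex MeasureTheory

lemma dss_key (Δt c : ℝ) (hΔt : Δt ≠ 0) (u0 u1 : ℂ) :
    (-(2*Δt)) * (((-(I*(u1-u0)/(Δt:ℂ)) - (c:ℂ)*((u1+u0)/2)) * (starRingEnd ℂ) ((u1+u0)/2)).im)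
      = ‖u1‖ ^ 2 - ‖u0‖ ^ 2 := by
  obtain ⟨x1, y1⟩ := u1
  obtain ⟨x0, y0⟩ := u0
  simp [Complex.sq_norm, Complex.normSq_apply, Complex.ext_iff, Complex.div_im, Complex.div_re,
    Complex.normSq_apply, mul_comm]
  field_simp
  ring

/-- The Durán–Sanz Serna scheme for the nonlinear Schrödinger equation
(`i(u_n - u_{n-1})/Δt + ∂ₓₓ v_n + f(v_n) v_n = 0` with `v_n = (u_n + u_{n-1})/2`,
`f` real-valued, and homogeneous Neumann boundary conditions) conserves the
discrete L² norm: `‖u_n‖_{L²(a,b)} = ‖u_{n-1}‖_{L²(a,b)}`. -/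
theorem duran_sanz_serna_L2_conservation
    (a b Δt : ℝ) (hab : a < b) (hΔt : 0 < Δt)
    (f : ℂ → ℝ) (un uprev v : ℝ → ℂ)
    (hv : ContDiff ℝ 2 v) (hun : Continuous un) (huprev : Continuous uprev)
    (hvdef : ∀ x : ℝ, v x = (un x + uprev x) / 2)
    (hscheme : ∀ x ∈ Set.Icc a b,
      I * (un x - uprev x) / (Δt : ℂ) + deriv (deriv v) x + (f (v x) : ℂ) * v x = 0)
    (hNeumann_a : deriv v a = 0) (hNeumann_b : deriv v b = 0) :
    ∫ x in a..b, ‖un x‖ ^ 2 = ∫ x in a..b, ‖uprev x‖ ^ 2 := by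
  have hvd : Differentiable ℝ v := hv.differentiable (by norm_num)
  have hv' : ContDiff ℝ 1 (deriv v) := by
    have := (contDiff_succ_iff_deriv (n := 1)).mp (by exact_mod_cast hv)
    exact this.2.2
  have hv'd : Differentiable ℝ (deriv v) := hv'.differentiable one_ne_zero
  -- g x = Im (v'(x) * conj (v x))
  set g : ℝ → ℝ := fun x => ((deriv v x) * (starRingEnd ℂ) (v x)).im with hg
  set G : ℝ → ℝ := fun x => (-(2*Δt)) * g x with hG
  have hgd : ∀ x, HasDerivAt g
      ((deriv (deriv v) x * (starRingEnd ℂ) (v x) + deriv v x * (starRingEnd ℂ) (deriv v x)).im) x := by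
    intro x
    have h1 : HasDerivAt v (deriv v x) x := (hvd x).hasDerivAt
    have h2 : HasDerivAt (deriv v) (deriv (deriv v) x) x := (hv'd x).hasDerivAt
    have hc : HasDerivAt (fun y => (starRingEnd ℂ) (v y)) ((starRingEnd ℂ) (deriv v x)) x :=
      h1.star
    have hp := h2.mul hc
    have := (Complex.imCLM.hasFDerivAt.comp x hp.hasFDerivAt).hasDerivAt
    exact (Complex.imCLM.hasFDerivAt.comp_hasDerivAt x hp)
  have habs : ∀ x, (deriv v x * (starRingEnd ℂ) (deriv v x)).im = 0 := by
    intro x; simp [Complex.mul_im, Complex.conj_im, Complex.conj_re]; ring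
  have hGd : ∀ x ∈ Set.uIcc a b, HasDerivAt G
      (‖un x‖ ^ 2 - ‖uprev x‖ ^ 2) x := by
    intro x hx
    rw [Set.uIcc_of_le hab.le] at hx
    have hs := hscheme x hx
    have hd2 : deriv (deriv v) x = -(I * (un x - uprev x) / (Δt:ℂ)) - (f (v x) : ℂ) * v x := by
      linear_combination hs
    set c := f (v x) with hc
    have hkey := dss_key Δt c (ne_of_gt hΔt) (uprev x) (un x)
    have := ((hgd x).const_mul (-(2*Δt)))
    refine this.congr_deriv ?_
    rw [Complex.add_im, habs, add_zero, hd2, hvdef x]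
    linarith [hkey]
  have hint : ∫ x in a..b, (‖un x‖ ^ 2 - ‖uprev x‖ ^ 2) = G b - G a := by
    apply intervalIntegral.integral_eq_sub_of_hasDerivAt hGd
    apply Continuous.intervalIntegrable
    exact ((continuous_norm.comp hun).pow 2).sub ((continuous_norm.comp huprev).pow 2)
  have hGa : G a = 0 := by simp [hG, hg, hNeumann_a]
  have hGb : G b = 0 := by simp [hG, hg, hNeumann_b]
  have hi1 : IntervalIntegrable (fun x => ‖un x‖ ^ 2) volume a b :=
    ((continuous_norm.comp hun).pow 2).intervalIntegrable a b
  have hi2 : IntervalIntegrable (fun x => ‖uprev x‖ ^ 2) volume a b :=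
    ((continuous_norm.comp huprev).pow 2).intervalIntegrable a b
  have := intervalIntegral.integral_sub hi1 hi2
  rw [hint, hGa, hGb] at this
  linarith [this.symm]
end
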